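/- Let q be an odd prime power, V = F_q^d with quadratic form Q(v) = v₁² + ... + v_d², χ a nontrivial additive character of F_q, and for m ∈ V, t ∈ F_q define λ_{m,t} = Σ_{x ∈ V, x ≠ 0, Q(x) = t} χ(m·x). Then λ_{m,t} = q^{d−1}·[m = 0] − [t = 0] + (1/q) Σ_{s ∈ F_q, s ≠ 0} χ(−st − Q(m)/(4s)) G(s)^d, where G(s) = Σ_{y ∈ F_q} χ(sy²) is the Gauss sum and [·] is the indicator. -/

import Mathlib

open Finset

private lemma addChar_map_sum {F : Type*} [AddCommMonoid F] {ι : Type*}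
    (χ : AddChar F ℂ) (s : Finset ι) (f : ι → F) :
    χ (∑ i ∈ s, f i) = ∏ i ∈ s, χ (f i) := by
  classical
  induction s using Finset.cons_induction with
  | empty => simp
  | cons a s ha ih =>
      rw [Finset.sum_cons, Finset.prod_cons, AddChar.map_add_eq_mul, ih]

/-- Eigenvalues of the distance-t graph: the character sum over the sphere of radius t
equals q^{d−1}·[m=0] − [t=0] + (1/q) Σ_{s≠0} χ(−st − Q(m)/(4s)) G(s)^d. -/
theorem eigenvalue_formula
    (F : Type*) [Field F] [Fintype F] [DecidableEq F]
    (hodd : Odd (Fintype.card F))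
    (d : ℕ) (hd : 1 ≤ d)
    (χ : AddChar F ℂ) (hχ : χ ≠ 1) (m : Fin d → F) (t : F) :
    ∑ x ∈ univ.filter (fun x : Fin d → F => x ≠ 0 ∧ ∑ i, x i ^ 2 = t),
        χ (∑ i, m i * x i)
      = (if m = 0 then (Fintype.card F : ℂ) ^ (d - 1) else 0)
        - (if t = 0 then 1 else 0)
        + (Fintype.card F : ℂ)⁻¹ *
            ∑ s ∈ univ.filter (fun s : F => s ≠ 0),
              χ (-(s * t) - (∑ i, m i ^ 2) / (4 * s)) * (∑ y : F, χ (s * y ^ 2)) ^ d := by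
  classical
  set q : ℂ := (Fintype.card F : ℂ) with hqdef
  have hq0 : q ≠ 0 := Nat.cast_ne_zero.mpr Fintype.card_ne_zero
  have hprim : χ.IsPrimitive := AddChar.IsPrimitive.of_ne_one hχ
  have hchar2 : ringChar F ≠ 2 := by
    intro h
    have h1 := FiniteField.even_card_of_char_two h
    have h2 := Nat.odd_iff.mp hodd
    omega
  have h2 : (2 : F) ≠ 0 := Ring.two_ne_zero hchar2
  have h4 : (4 : F) ≠ 0 := by
    have h42 : (4 : F) = 2 * 2 := by norm_num
    rw [h42]
    exact mul_ne_zero h2 h2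
  -- orthogonality
  have orth : ∀ a : F, ∑ s : F, χ (s * a) = if a = 0 then q else 0 := by
    intro a
    simpa using AddChar.sum_mulShift a hprim
  -- completing the square
  have sq : ∀ s : F, s ≠ 0 → ∀ c : F,
      ∑ y : F, χ (s * y ^ 2 + c * y)
        = χ (-(c ^ 2) / (4 * s)) * ∑ y : F, χ (s * y ^ 2) := by
    intro s hs c
    have key : ∀ y : F, s * (y - c / (2 * s)) ^ 2 + c * (y - c / (2 * s))
        = s * y ^ 2 + (-(c ^ 2) / (4 * s)) := by
      intro y
      field_simp [hs, h4]
      ring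
    calc ∑ y : F, χ (s * y ^ 2 + c * y)
        = ∑ y : F, χ (s * (y - c / (2 * s)) ^ 2 + c * (y - c / (2 * s))) :=
          (Equiv.sum_comp (Equiv.subRight (c / (2 * s)))
            (fun y => χ (s * y ^ 2 + c * y))).symm
      _ = ∑ y : F, χ (-(c ^ 2) / (4 * s)) * χ (s * y ^ 2) := by
          refine Finset.sum_congr rfl fun y _ => ?_
          rw [key y, add_comm, AddChar.map_add_eq_mul]
      _ = χ (-(c ^ 2) / (4 * s)) * ∑ y : F, χ (s * y ^ 2) := by rw [Finset.mul_sum]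
  set T : F → ℂ := fun s =>
    ∑ x : Fin d → F, χ (s * ((∑ i, x i ^ 2) - t) + ∑ i, m i * x i) with hT
  -- expansion of the (unrestricted) sphere sum
  have expand : ∑ s : F, T s
      = q * ∑ x ∈ univ.filter (fun x : Fin d → F => ∑ i, x i ^ 2 = t),
          χ (∑ i, m i * x i) := by
    calc ∑ s : F, T s
        = ∑ x : Fin d → F, ∑ s : F,
            χ (s * ((∑ i, x i ^ 2) - t) + ∑ i, m i * x i) := Finset.sum_comm
      _ = ∑ x : Fin d → F,
            (if (∑ i, x i ^ 2) = t then q else 0) * χ (∑ i, m i * x i) := by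
          refine Finset.sum_congr rfl fun x _ => ?_
          rw [show (if (∑ i, x i ^ 2) = t then q else 0)
              = ∑ s : F, χ (s * ((∑ i, x i ^ 2) - t)) from by
            rw [orth]; simp [sub_eq_zero], Finset.sum_mul]
          exact Finset.sum_congr rfl fun s _ => AddChar.map_add_eq_mul χ _ _
      _ = q * ∑ x ∈ univ.filter (fun x : Fin d → F => ∑ i, x i ^ 2 = t),
            χ (∑ i, m i * x i) := by
          rw [Finset.mul_sum, Finset.sum_filter]
          refine Finset.sum_congr rfl fun x _ => ?_
          simp [ite_mul, mul_ite]
  have claimB : ∑ x ∈ univ.filter (fun x : Fin d → F => ∑ i, x i ^ 2 = t),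
      χ (∑ i, m i * x i) = q⁻¹ * ∑ s : F, T s := by
    rw [expand, inv_mul_cancel_left₀ hq0]
  -- the s = 0 term
  have claimC : T 0 = if m = 0 then q ^ d else 0 := by
    have : T 0 = ∏ i : Fin d, ∑ y : F, χ (m i * y) := by
      rw [hT]
      simp only [zero_mul, zero_add]
      rw [Fintype.prod_sum fun i y => χ (m i * y)]
      exact Finset.sum_congr rfl fun x _ => addChar_map_sum χ univ _
    rw [this]
    by_cases hm : m = 0
    · simp [hm, orth, hm, Finset.prod_const, hqdef]
    · obtain ⟨i, hi⟩ := Function.ne_iff.mp hm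
      rw [if_neg hm]
      refine Finset.prod_eq_zero (Finset.mem_univ i) ?_
      have : ∑ y : F, χ (m i * y) = ∑ y : F, χ (y * m i) := by
        exact Finset.sum_congr rfl fun y _ => by rw [mul_comm]
      rw [this, orth, if_neg (show m i ≠ 0 by simpa using hi)]
  -- the s ≠ 0 terms
  have claimD : ∀ s : F, s ≠ 0 →
      T s = χ (-(s * t) - (∑ i, m i ^ 2) / (4 * s)) * (∑ y : F, χ (s * y ^ 2)) ^ d := by
    intro s hs
    have step1 : T s = χ (-(s * t)) *
        ∏ i : Fin d, ∑ y : F, χ (s * y ^ 2 + m i * y) := by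
      rw [hT]
      rw [Fintype.prod_sum fun i y => χ (s * y ^ 2 + m i * y), Finset.mul_sum]
      refine Finset.sum_congr rfl fun x _ => ?_
      rw [← addChar_map_sum χ univ (fun i => s * x i ^ 2 + m i * x i),
        ← AddChar.map_add_eq_mul]
      congr 1
      rw [Finset.sum_add_distrib, mul_sub, Finset.mul_sum]
      ring
    rw [step1]
    have step2 : ∏ i : Fin d, ∑ y : F, χ (s * y ^ 2 + m i * y)
        = χ (-(∑ i, m i ^ 2) / (4 * s)) * (∑ y : F, χ (s * y ^ 2)) ^ d := by
      calc ∏ i : Fin d, ∑ y : F, χ (s * y ^ 2 + m i * y)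
          = ∏ i : Fin d, (χ (-(m i ^ 2) / (4 * s)) * ∑ y : F, χ (s * y ^ 2)) :=
            Finset.prod_congr rfl fun i _ => sq s hs (m i)
        _ = (∏ i : Fin d, χ (-(m i ^ 2) / (4 * s))) * (∑ y : F, χ (s * y ^ 2)) ^ d := by
            rw [Finset.prod_mul_distrib, Finset.prod_const, Finset.card_univ,
              Fintype.card_fin]
        _ = χ (-(∑ i, m i ^ 2) / (4 * s)) * (∑ y : F, χ (s * y ^ 2)) ^ d := by
            rw [← addChar_map_sum χ univ (fun i => -(m i ^ 2) / (4 * s))]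
            congr 2
            rw [← Finset.sum_div, ← Finset.sum_neg_distrib]
    rw [step2, ← mul_assoc, ← AddChar.map_add_eq_mul]
    congr 2
    ring
  -- split the s-sum at 0
  have splitS : ∑ s : F, T s = T 0 + ∑ s ∈ univ.filter (fun s : F => s ≠ 0), T s := by
    rw [← Finset.sum_filter_add_sum_filter_not univ (fun s : F => s = 0)]
    congr 1
    rw [Finset.filter_eq']
    simp
  -- split off x = 0 from the sphere
  have hfil : univ.filter (fun x : Fin d → F => x ≠ 0 ∧ ∑ i, x i ^ 2 = t)
      = (univ.filter (fun x : Fin d → F => ∑ i, x i ^ 2 = t)).erase 0 := by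
    ext x
    simp [Finset.mem_erase, and_comm]
  have hQ0 : (∑ i : Fin d, (0 : Fin d → F) i ^ 2) = 0 := by simp
  have claimA : ∑ x ∈ univ.filter (fun x : Fin d → F => x ≠ 0 ∧ ∑ i, x i ^ 2 = t),
      χ (∑ i, m i * x i)
      = (∑ x ∈ univ.filter (fun x : Fin d → F => ∑ i, x i ^ 2 = t),
          χ (∑ i, m i * x i)) - (if t = 0 then 1 else 0) := by
    rw [hfil]
    by_cases ht : t = 0
    · rw [if_pos ht]
      rw [Finset.sum_erase_eq_sub (by simp [ht] : (0 : Fin d → F) ∈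
        univ.filter (fun x : Fin d → F => ∑ i, x i ^ 2 = t))]
      simp
    · rw [if_neg ht, Finset.erase_eq_of_notMem (by
        simp only [Finset.mem_filter, Finset.mem_univ, true_and]
        rw [hQ0]
        exact fun h => ht h.symm), sub_zero]
  -- put it all together
  rw [claimA, claimB, splitS, mul_add, claimC]
  have hterm0 : q⁻¹ * (if m = 0 then q ^ d else 0)
      = (if m = 0 then q ^ (d - 1) else 0) := by
    by_cases hm : m = 0
    · rw [if_pos hm, if_pos hm]
      have : q ^ d = q * q ^ (d - 1) := by
        rw [← pow_succ']
        congr 1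
        omega
      rw [this, inv_mul_cancel_left₀ hq0]
    · simp [hm]
  rw [hterm0]
  have hlast : ∑ s ∈ univ.filter (fun s : F => s ≠ 0), T s
      = ∑ s ∈ univ.filter (fun s : F => s ≠ 0),
          χ (-(s * t) - (∑ i, m i ^ 2) / (4 * s)) * (∑ y : F, χ (s * y ^ 2)) ^ d := by
    refine Finset.sum_congr rfl fun s hs => ?_
    exact claimD s (Finset.mem_filter.mp hs).2
  rw [hlast]
  ring
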